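/- Let A be a finite p-algebra and μ a completely meet-irreducible congruence on A. Then μ has exactly two equivalence classes if and only if the ⊤-class of μ equals the principal filter {x ∈ A : a ≤ x} of some atom a of A. -/

import Mathlib

variable {A : Type*}

/-- A congruence of a p-algebra `(A, ⊓, ⊔, *, ⊥, ⊤)`: an equivalence relation
compatible with meet, join and the pseudocomplementation `star`. -/
def IsPCong [Lattice A] (star : A → A) (θ : A → A → Prop) : Prop :=
  Equivalence θ ∧
  (∀ a b c d : A, θ a b → θ c d → θ (a ⊓ c) (b ⊓ d)) ∧
  (∀ a b c d : A, θ a b → θ c d → θ (a ⊔ c) (b ⊔ d)) ∧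
  (∀ a b : A, θ a b → θ (star a) (star b))

/-- A completely meet-irreducible congruence: a congruence `μ` such that whenever `μ`
is the intersection of a (possibly empty) family of congruences, `μ` belongs to the
family.  (Taking the empty family, such a `μ` is never the total relation.) -/
def IsCMI [Lattice A] (star : A → A) (μ : A → A → Prop) : Prop :=
  IsPCong star μ ∧
  ∀ S : Set (A → A → Prop), (∀ θ ∈ S, IsPCong star θ) →
    (μ = fun a b => ∀ θ ∈ S, θ a b) → μ ∈ S

/-- A relation has exactly two equivalence classes. -/
def HasTwoClasses (θ : A → A → Prop) : Prop :=
  ∃ a b : A, ¬ θ a b ∧ ∀ c : A, θ c a ∨ θ c b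

/-- A prime filter of a lattice: proper, nonempty, upward closed, closed under `⊓`,
and `a ⊔ b ∈ F` implies `a ∈ F` or `b ∈ F`. -/
def IsPrimeFilter [Lattice A] (F : Set A) : Prop :=
  F.Nonempty ∧ F ≠ Set.univ ∧ (∀ a b : A, a ∈ F → a ≤ b → b ∈ F) ∧
  (∀ a b : A, a ∈ F → b ∈ F → a ⊓ b ∈ F) ∧
  (∀ a b : A, a ⊔ b ∈ F → a ∈ F ∨ b ∈ F)

/-- In a finite p-algebra, a completely meet-irreducible congruence has exactly two
classes iff its `⊤`-class is the principal filter of an atom. -/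
theorem stmt14 [DistribLattice A] [BoundedOrder A] [Finite A] (star : A → A)
    (hp : ∀ x y : A, x ⊓ y = ⊥ ↔ x ≤ star y)
    (μ : A → A → Prop) (hμ : IsCMI star μ) :
    HasTwoClasses μ ↔ ∃ a : A, IsAtom a ∧ {x : A | μ x ⊤} = Set.Ici a := by
  obtain ⟨⟨heq, hmeet, hjoin, hstar⟩, -⟩ := hμ
  have hFup : ∀ x y : A, μ x ⊤ → x ≤ y → μ y ⊤ := by
    intro x y hx hxy
    have h := hjoin x ⊤ y y hx (heq.refl y)
    simpa [sup_eq_right.mpr hxy] using h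
  constructor
  · rintro ⟨a₀, b₀, hab, hall⟩
    have hFfin : ({x : A | μ x ⊤}).Finite := Set.toFinite _
    obtain ⟨a, haF, hamin⟩ : ∃ a ∈ {x : A | μ x ⊤}, ∀ a' ∈ {x : A | μ x ⊤},
        id a' ≤ id a → id a = id a' := by
      obtain ⟨a, ha⟩ := hFfin.exists_minimalFor id _ ⟨⊤, heq.refl ⊤⟩
      exact ⟨a, ha.prop, fun a' h1 h2 => le_antisymm (ha.le_of_le h1 h2) h2⟩
    have hmin : ∀ x, μ x ⊤ → a ≤ x := by
      intro x hx
      have hx' : μ (a ⊓ x) ⊤ := by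
        have h := hmeet a ⊤ x ⊤ haF hx
        simpa using h
      have := hamin (a ⊓ x) hx' inf_le_left
      simp only [id] at this
      rw [this]
      exact inf_le_right
    have hbotF : ¬ μ (⊥ : A) ⊤ := by
      intro hb
      have hc : ∀ c : A, μ c ⊥ := by
        intro c
        have h := hmeet c c ⊤ ⊥ (heq.refl c) (heq.symm hb)
        simpa using h
      exact hab (heq.trans (hc a₀) (heq.symm (hc b₀)))
    have ha0 : a ≠ ⊥ := fun h => hbotF (h ▸ haF)
    -- any two elements outside the top class are related
    have hsame : ∀ x y : A, ¬ μ x ⊤ → ¬ μ y ⊤ → μ x y := by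
      intro x y hx hy
      rcases hall ⊤ with hT | hT
      · rcases hall x with h1 | h1
        · exact absurd (heq.trans h1 (heq.symm hT)) hx
        · rcases hall y with h2 | h2
          · exact absurd (heq.trans h2 (heq.symm hT)) hy
          · exact heq.trans h1 (heq.symm h2)
      · rcases hall x with h1 | h1
        · rcases hall y with h2 | h2
          · exact heq.trans h1 (heq.symm h2)
          · exact absurd (heq.trans h2 (heq.symm hT)) hy
        · exact absurd (heq.trans h1 (heq.symm hT)) hx
    refine ⟨a, ⟨ha0, ?_⟩, ?_⟩
    · intro b hb
      by_contra hbne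
      have hbF : ¬ μ b ⊤ := fun h => absurd (hmin b h) hb.not_ge
      have hb0 : μ b ⊥ := hsame b ⊥ hbF hbotF
      have hsb : μ (star b) (star ⊥) := hstar b ⊥ hb0
      have hsbot : star (⊥ : A) = ⊤ :=
        top_le_iff.mp ((hp ⊤ ⊥).mp (inf_bot_eq ⊤))
      have hsbF : μ (star b) ⊤ := hsbot ▸ hsb
      have hasb : a ≤ star b := hmin _ hsbF
      have hsbb : star b ⊓ b = ⊥ := (hp (star b) b).mpr le_rfl
      have : b ≤ ⊥ := hsbb ▸ le_inf (hb.le.trans hasb) le_rfl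
      exact hbne (le_bot_iff.mp this)
    · ext x
      exact ⟨fun hx => hmin x hx, fun hx => hFup a x haF hx⟩
  · rintro ⟨a, ha, hF⟩
    have haT : μ a ⊤ := by
      have : a ∈ Set.Ici a := le_rfl
      rw [← hF] at this; exact this
    refine ⟨⊤, ⊥, ?_, ?_⟩
    · intro h
      have hb : (⊥ : A) ∈ Set.Ici a := by
        rw [← hF]; exact heq.symm h
      exact ha.1 (le_bot_iff.mp hb)
    · intro c
      by_cases hc : a ≤ c
      · left
        have : c ∈ Set.Ici a := hc
        rw [← hF] at this; exact this
      · right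
        have hac : a ⊓ c = ⊥ := by
          rcases ha.le_iff.mp (inf_le_left : a ⊓ c ≤ a) with h | h
          · exact h
          · exact absurd (inf_eq_left.mp h) hc
        have h := hmeet a ⊤ c c haT (heq.refl c)
        rw [hac, top_inf_eq] at h
        exact heq.symm h
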